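/- Let q ≥ 2, n ≥ 1, γ ≥ 0 with m = n(1+γ) an integer, and let y ∈ [q]^n. Then the probability that a uniformly random Z ∈ [q]^m contains y as a subsequence is at least (q-1)^{-n} · (m choose n) · ((q-1)/q)^m. -/

import Mathlib

open Finset

def avoidEmb {q : ℕ} (a : Fin q) (b : Fin (q - 1)) : Fin q :=
  if h : b.val < a.val then ⟨b.val, h.trans a.isLt⟩
  else ⟨b.val + 1, by have hb := b.isLt; have ha := a.isLt; omega⟩

lemma avoidEmb_ne {q : ℕ} (a : Fin q) (b : Fin (q - 1)) : avoidEmb a b ≠ a := by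
  unfold avoidEmb
  split <;> (intro h; rw [Fin.ext_iff] at h; simp only at h; omega)

lemma avoidEmb_inj {q : ℕ} (a : Fin q) {b b' : Fin (q - 1)}
    (h : avoidEmb a b = avoidEmb a b') : b = b' := by
  unfold avoidEmb at h
  rw [Fin.ext_iff] at h
  rw [Fin.ext_iff]
  split at h <;> split at h <;> simp only at h <;> omega

def idx {m : ℕ} (s : Finset (Fin m)) (j : Fin m) : ℕ := (s.filter (· < j)).card

lemma idx_lt {m n : ℕ} {s : Finset (Fin m)} (hs : s.card = n) {j : Fin m} (hj : j ∈ s) :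
    idx s j < n := by
  have h : s.filter (· < j) ⊂ s := Finset.filter_ssubset.mpr ⟨j, hj, by simp⟩
  simpa [idx, hs] using Finset.card_lt_card h

lemma idx_orderEmb {m n : ℕ} (s : Finset (Fin m)) (hs : s.card = n) (i : Fin n) :
    idx s (s.orderEmbOfFin hs i) = i := by
  have he : s.filter (· < s.orderEmbOfFin hs i)
      = (Finset.Iio i).map (s.orderEmbOfFin hs).toEmbedding := by
    ext x
    simp only [Finset.mem_filter, Finset.mem_map, Finset.mem_Iio,
      RelEmbedding.coe_toEmbedding]
    constructor
    · rintro ⟨hxs, hxlt⟩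
      have : x ∈ Set.range (s.orderEmbOfFin hs) := by
        rw [Finset.range_orderEmbOfFin]; exact hxs
      obtain ⟨k, rfl⟩ := this
      exact ⟨k, (s.orderEmbOfFin hs).lt_iff_lt.mp hxlt, rfl⟩
    · rintro ⟨k, hk, rfl⟩
      exact ⟨s.orderEmbOfFin_mem hs k, (s.orderEmbOfFin hs).lt_iff_lt.mpr hk⟩
  rw [idx, he, Finset.card_map, Fin.card_Iio]

variable {q m n : ℕ}

def zfun (y : List (Fin q)) (n : ℕ) (d : Fin q) (s : Finset (Fin m))
    (g : {x : Fin m // x ∈ sᶜ} → Fin (q - 1)) (j : Fin m) : Fin q :=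
  if hj : j ∈ s then y.getD (idx s j) d
  else avoidEmb (y.getD (min (idx s j) (n - 1)) d) (g ⟨j, Finset.mem_compl.mpr hj⟩)

lemma zfun_get {y : List (Fin q)} {d : Fin q} {s : Finset (Fin m)}
    {g : {x : Fin m // x ∈ sᶜ} → Fin (q - 1)} (hs : s.card = n) (hy : y.length = n)
    (i : Fin n) :
    zfun y n d s g (s.orderEmbOfFin hs i) = y.get (Fin.cast hy.symm i) := by
  have hmem := s.orderEmbOfFin_mem hs i
  rw [zfun, dif_pos hmem, idx_orderEmb s hs i]
  have hi : (i : ℕ) < y.length := by omega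
  simp [List.getD_eq_getElem?_getD, List.getElem?_eq_getElem hi, List.get_eq_getElem]

lemma zfun_sublist {y : List (Fin q)} {d : Fin q} {s : Finset (Fin m)}
    {g : {x : Fin m // x ∈ sᶜ} → Fin (q - 1)} (hs : s.card = n) (hy : y.length = n) :
    y.Sublist (List.ofFn (zfun y n d s g)) := by
  rw [List.sublist_iff_exists_fin_orderEmbedding_get_eq]
  have hlen : (List.ofFn (zfun y n d s g)).length = m := List.length_ofFn
  refine ⟨((Fin.castOrderIso hy).toOrderEmbedding.trans
      ((s.orderEmbOfFin hs).trans (Fin.castOrderIso hlen.symm).toOrderEmbedding)), ?_⟩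
  intro i
  rw [List.get_ofFn]
  have := zfun_get (d := d) (g := g) hs hy (Fin.cast hy i)
  have h1 : y.get (Fin.cast (by omega) (Fin.cast hy i)) = y.get i := by
    simp [List.get_eq_getElem]
  rw [h1] at this
  convert this.symm using 2
  rfl

lemma zfun_inj_g {y : List (Fin q)} {d : Fin q} {s : Finset (Fin m)}
    {g g' : {x : Fin m // x ∈ sᶜ} → Fin (q - 1)}
    (h : zfun y n d s g = zfun y n d s g') : g = g' := by
  funext x
  obtain ⟨j, hj⟩ := x
  have hjs : j ∉ s := Finset.mem_compl.mp hj
  have hh := congrFun h j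
  rw [zfun, zfun, dif_neg hjs, dif_neg hjs] at hh
  exact avoidEmb_inj _ hh

lemma zfun_s_aux {y : List (Fin q)} {d : Fin q} {s s' : Finset (Fin m)}
    {g : {x : Fin m // x ∈ sᶜ} → Fin (q - 1)} {g' : {x : Fin m // x ∈ s'ᶜ} → Fin (q - 1)}
    (hs : s.card = n) (h : zfun y n d s g = zfun y n d s' g') {j : Fin m}
    (hj : j ∈ s) (hj' : j ∉ s') (hag : ∀ x : Fin m, x < j → (x ∈ s ↔ x ∈ s')) : False := by
  have hidx : idx s j = idx s' j := by
    unfold idx; congr 1; ext x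
    simp only [Finset.mem_filter]
    constructor
    · rintro ⟨h1, h2⟩; exact ⟨(hag x h2).mp h1, h2⟩
    · rintro ⟨h1, h2⟩; exact ⟨(hag x h2).mpr h1, h2⟩
  have hlt : idx s j < n := idx_lt hs hj
  have hh := congrFun h j
  rw [zfun, zfun, dif_pos hj, dif_neg hj'] at hh
  rw [← hidx, min_eq_left (by omega)] at hh
  exact avoidEmb_ne _ _ hh.symm

lemma zfun_s_eq {y : List (Fin q)} {d : Fin q} {s s' : Finset (Fin m)}
    {g : {x : Fin m // x ∈ sᶜ} → Fin (q - 1)} {g' : {x : Fin m // x ∈ s'ᶜ} → Fin (q - 1)}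
    (hs : s.card = n) (hs' : s'.card = n)
    (h : zfun y n d s g = zfun y n d s' g') : s = s' := by
  by_contra hne
  have ht : ((s \ s') ∪ (s' \ s)).Nonempty := by
    rw [Finset.nonempty_iff_ne_empty]
    intro he
    apply hne
    rw [Finset.union_eq_empty, Finset.sdiff_eq_empty_iff_subset,
      Finset.sdiff_eq_empty_iff_subset] at he
    exact Finset.Subset.antisymm he.1 he.2
  have hjmem := Finset.min'_mem _ ht
  set j := ((s \ s') ∪ (s' \ s)).min' ht with hjdef
  have hag : ∀ x : Fin m, x < j → (x ∈ s ↔ x ∈ s') := by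
    intro x hx
    by_contra hxc
    have hxm : x ∈ (s \ s') ∪ (s' \ s) := by
      simp only [Finset.mem_union, Finset.mem_sdiff]
      tauto
    exact absurd (Finset.min'_le _ _ hxm) (not_le.mpr hx)
  rw [Finset.mem_union, Finset.mem_sdiff, Finset.mem_sdiff] at hjmem
  rcases hjmem with ⟨h1, h2⟩ | ⟨h1, h2⟩
  · exact zfun_s_aux hs h h1 h2 hag
  · exact zfun_s_aux hs' h.symm h1 h2 (fun x hx => (hag x hx).symm)

lemma count_ge (hq : 2 ≤ q) (hn : 1 ≤ n) (hnm : n ≤ m)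
    (y : List (Fin q)) (hy : y.length = n) :
    m.choose n * (q - 1) ^ (m - n) ≤
      (Finset.univ.filter (fun Z : Fin m → Fin q => y.Sublist (List.ofFn Z))).card := by
  classical
  set d : Fin q := ⟨0, by omega⟩ with hd
  set F : Finset (Fin m) → Finset (Fin m → Fin q) := fun s =>
    Finset.image (fun g : {x : Fin m // x ∈ sᶜ} → Fin (q - 1) => zfun y n d s g)
      Finset.univ with hF
  have hsub : ((Finset.univ.powersetCard n).biUnion F) ⊆
      Finset.univ.filter (fun Z => y.Sublist (List.ofFn Z)) := by
    intro Z hZ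
    rw [Finset.mem_biUnion] at hZ
    obtain ⟨s, hsmem, hZs⟩ := hZ
    rw [Finset.mem_powersetCard] at hsmem
    obtain ⟨g, _, rfl⟩ := Finset.mem_image.mp hZs
    simp only [Finset.mem_filter, Finset.mem_univ, true_and]
    exact zfun_sublist hsmem.2 hy
  have hdisj : ∀ s ∈ Finset.univ.powersetCard n, ∀ s' ∈ Finset.univ.powersetCard n,
      s ≠ s' → Disjoint (F s) (F s') := by
    intro s hs s' hs' hne
    rw [Finset.mem_powersetCard] at hs hs'
    rw [Finset.disjoint_left]
    intro Z hZ hZ'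
    obtain ⟨g, _, hg⟩ := Finset.mem_image.mp hZ
    obtain ⟨g', _, hg'⟩ := Finset.mem_image.mp hZ'
    exact hne (zfun_s_eq hs.2 hs'.2 (hg.trans hg'.symm))
  have hcard : ∀ s ∈ Finset.univ.powersetCard n, (F s).card = (q - 1) ^ (m - n) := by
    intro s hs
    rw [Finset.mem_powersetCard] at hs
    rw [hF]
    rw [Finset.card_image_of_injective _ (fun g g' => zfun_inj_g)]
    rw [Finset.card_univ, Fintype.card_fun]
    congr 1
    · exact Fintype.card_fin _
    · rw [Fintype.card_coe, Finset.card_compl, hs.2, Fintype.card_fin]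
  calc m.choose n * (q - 1) ^ (m - n)
      = ((Finset.univ.powersetCard n).biUnion F).card := by
        rw [Finset.card_biUnion hdisj, Finset.sum_congr rfl hcard, Finset.sum_const,
          Finset.card_powersetCard, Finset.card_univ, Fintype.card_fin, smul_eq_mul]
    _ ≤ _ := Finset.card_le_card hsub

/-- For a fixed `y ∈ [q]^n` and a uniformly random `Z ∈ [q]^m` with `m = n(1+γ)`, the
probability that `y` is a subsequence of `Z` is at least
`(q-1)^{-n} · (m choose n)((q-1)/q)^m`. -/
theorem subsequence_probability_lower (q n m : ℕ) (γ : ℝ) (hq : 2 ≤ q) (hn : 1 ≤ n)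
    (hγ : 0 ≤ γ) (hm : (m : ℝ) = (n : ℝ) * (1 + γ))
    (y : List (Fin q)) (hy : y.length = n) :
    (((q : ℝ) - 1) ^ n)⁻¹ * (m.choose n : ℝ) * (((q : ℝ) - 1) / q) ^ m
      ≤ ((Finset.univ.filter
          (fun Z : Fin m → Fin q => y.Sublist (List.ofFn Z))).card : ℝ) / (q : ℝ) ^ m := by
  have hnm : n ≤ m := by
    have h1 : (n : ℝ) ≤ (m : ℝ) := by nlinarith [Nat.cast_nonneg (α := ℝ) n]
    exact_mod_cast h1
  have hN := count_ge hq hn hnm y hy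
  have hq2 : (2 : ℝ) ≤ (q : ℝ) := by exact_mod_cast hq
  have hr : (0 : ℝ) < (q : ℝ) - 1 := by linarith
  have hq0 : (0 : ℝ) < (q : ℝ) := by linarith
  have hpow : ((q : ℝ) - 1) ^ m = ((q : ℝ) - 1) ^ (m - n) * ((q : ℝ) - 1) ^ n := by
    rw [← pow_add]; congr 1; omega
  have key : (((q : ℝ) - 1) ^ n)⁻¹ * (m.choose n : ℝ) * (((q : ℝ) - 1) / q) ^ m
      = ((m.choose n : ℝ) * ((q : ℝ) - 1) ^ (m - n)) / (q : ℝ) ^ m := by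
    rw [div_pow, hpow]
    field_simp
  rw [key]
  gcongr
  calc (m.choose n : ℝ) * ((q : ℝ) - 1) ^ (m - n)
      = ((m.choose n * (q - 1) ^ (m - n) : ℕ) : ℝ) := by
        push_cast [Nat.cast_sub (show 1 ≤ q by omega)]; ring
    _ ≤ _ := Nat.cast_le.mpr hN
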